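/- Let {a_i mod n_i}_{i=1}^k be an exact covering system of ℤ with k ≥ 2 and moduli sorted increasingly. Then n_{k-p+1} = n_{k-p+2} = … = n_k, where p = p(n_k) is the smallest prime divisor of n_k; i.e., the largest modulus occurs at least p(n_k) times. -/

import Mathlib

open Finset ArithmeticFunction
open scoped ArithmeticFunction.Moebius

/-- The multiplicative arithmetic function `d ↦ d·[d ∣ c]`. -/
def NewmanFc (c : ℤ) : ArithmeticFunction ℤ :=
  ⟨fun d => if (d : ℤ) ∣ c ∧ d ≠ 0 then (d : ℤ) else 0, by simp⟩

lemma NewmanFc_apply (c : ℤ) (d : ℕ) :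
    NewmanFc c d = if (d : ℤ) ∣ c ∧ d ≠ 0 then (d : ℤ) else 0 := rfl

lemma NewmanFc_mult (c : ℤ) : (NewmanFc c).IsMultiplicative := by
  constructor
  · simp [NewmanFc_apply]
  · intro m n h
    rcases eq_or_ne m 0 with rfl | hm
    · simp [NewmanFc_apply]
    rcases eq_or_ne n 0 with rfl | hn0
    · simp [NewmanFc_apply]
    have hiff : ((m : ℤ) * n ∣ c) ↔ ((m : ℤ) ∣ c ∧ (n : ℤ) ∣ c) := by
      constructor
      · exact fun hd => ⟨(dvd_mul_right (m:ℤ) n).trans hd, (dvd_mul_left (n:ℤ) m).trans hd⟩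
      · rintro ⟨h1, h2⟩
        exact (Nat.isCoprime_iff_coprime.mpr h).mul_dvd h1 h2
    simp only [NewmanFc_apply, Nat.cast_mul, hiff]
    by_cases h1 : (m:ℤ) ∣ c <;> by_cases h2 : (n:ℤ) ∣ c <;>
      simp [h1, h2, hm, hn0, Nat.mul_ne_zero hm hn0]

lemma newman_conv_prime_pow (c : ℤ) {q e : ℕ} (hq : q.Prime) (he : e ≠ 0) :
    (μ * NewmanFc c) (q ^ e) = NewmanFc c (q ^ e) - NewmanFc c (q ^ (e - 1)) := by
  obtain ⟨m, rfl⟩ : ∃ m, e = m + 1 :=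
    ⟨e - 1, (Nat.succ_pred_eq_of_pos (Nat.pos_of_ne_zero he)).symm⟩
  rw [mul_apply, Nat.sum_divisorsAntidiagonal (f := fun x y => μ x * NewmanFc c y),
    Nat.divisors_prime_pow hq, Finset.sum_map]
  simp only [Function.Embedding.coeFn_mk]
  have hdiv : ∀ t ∈ Finset.range (m + 2), q ^ (m + 1) / q ^ t = q ^ (m + 1 - t) := by
    intro t ht
    have ht' := Finset.mem_range.mp ht
    rw [Nat.pow_div (by omega : t ≤ m + 1) hq.pos]
  rw [Finset.sum_congr rfl fun t ht => by rw [hdiv t ht]]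
  rw [Finset.sum_range_succ', Finset.sum_range_succ']
  have h0 : ∀ i, μ (q ^ (i + 1 + 1)) = 0 := fun i =>
    by rw [moebius_apply_prime_pow hq (by omega)]; simp
  simp only [h0, zero_mul, Finset.sum_const_zero, zero_add, pow_zero, pow_one,
    moebius_apply_one, moebius_apply_prime hq]
  push_cast
  simp [Nat.add_sub_cancel]
  ring

lemma newman_R_eq_prod (c : ℤ) {n : ℕ} (hn : n ≠ 0) :
    (μ * NewmanFc c) n = ∏ q ∈ n.primeFactors,
      (NewmanFc c (q ^ n.factorization q) - NewmanFc c (q ^ (n.factorization q - 1))) := by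
  rw [(isMultiplicative_moebius.mul (NewmanFc_mult c)).multiplicative_factorization _ hn,
    Finsupp.prod, ← Nat.support_factorization]
  exact Finset.prod_congr rfl fun q hq =>
    newman_conv_prime_pow c
      (Nat.prime_of_mem_primeFactors (Nat.support_factorization (n := n) ▸ hq))
      (Finsupp.mem_support_iff.mp hq)

lemma newman_totient_cast {n : ℕ} (hn : n ≠ 0) :
    (n.totient : ℤ) = ∏ q ∈ n.primeFactors,
      ((q : ℤ) ^ (n.factorization q - 1) * ((q : ℤ) - 1)) := by
  rw [Nat.totient_eq_prod_factorization hn, Finsupp.prod, ← Nat.support_factorization]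
  push_cast
  refine Finset.prod_congr rfl fun q hq => ?_
  have hq' : q.Prime := Nat.prime_of_mem_primeFactors (Nat.support_factorization (n := n) ▸ hq)
  rw [Nat.cast_sub hq'.one_le]
  push_cast
  ring

lemma newman_R_of_dvd {c : ℤ} {n : ℕ} (hn : n ≠ 0) (h : (n : ℤ) ∣ c) :
    (μ * NewmanFc c) n = (n.totient : ℤ) := by
  rw [newman_R_eq_prod c hn, newman_totient_cast hn]
  refine Finset.prod_congr rfl fun q hq => ?_
  have hq' : q.Prime := Nat.prime_of_mem_primeFactors hq
  set e := n.factorization q with he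
  have hepos : 0 < e := by
    rw [he]
    exact Nat.Prime.factorization_pos_of_dvd hq' hn (Nat.dvd_of_mem_primeFactors hq)
  have hd1 : ((q : ℤ) ^ e) ∣ c := by
    refine dvd_trans ?_ h
    exact_mod_cast Int.natCast_dvd_natCast.mpr (Nat.ordProj_dvd n q)
  have hd2 : ((q : ℤ) ^ (e - 1)) ∣ c := dvd_trans (pow_dvd_pow _ (Nat.sub_le e 1)) hd1
  rw [NewmanFc_apply, NewmanFc_apply, if_pos, if_pos]
  · obtain ⟨m, hm⟩ : ∃ m, e = m + 1 := ⟨e - 1, by omega⟩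
    push_cast
    rw [hm]
    simp only [Nat.add_sub_cancel, pow_succ]
    ring
  · exact ⟨by exact_mod_cast hd2, pow_ne_zero _ hq'.ne_zero⟩
  · exact ⟨by exact_mod_cast hd1, pow_ne_zero _ hq'.ne_zero⟩

lemma newman_factor_abs_le {c : ℤ} {n : ℕ} (hn : n ≠ 0) {q : ℕ} (hq : q ∈ n.primeFactors) :
    |NewmanFc c (q ^ n.factorization q) - NewmanFc c (q ^ (n.factorization q - 1))|
      ≤ (q : ℤ) ^ (n.factorization q - 1) * ((q : ℤ) - 1) := by
  have hq' : q.Prime := Nat.prime_of_mem_primeFactors hq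
  set e := n.factorization q with he
  have hepos : 0 < e :=
    Nat.Prime.factorization_pos_of_dvd hq' hn (Nat.dvd_of_mem_primeFactors hq)
  have h2 : (2 : ℤ) ≤ (q : ℤ) := by exact_mod_cast hq'.two_le
  have hple : (0:ℤ) ≤ (q:ℤ) ^ (e - 1) := by positivity
  rw [NewmanFc_apply, NewmanFc_apply]
  by_cases h1 : ((q ^ e : ℕ) : ℤ) ∣ c
  · have h2' : ((q ^ (e - 1) : ℕ) : ℤ) ∣ c := by
      refine dvd_trans ?_ h1
      exact_mod_cast pow_dvd_pow (q:ℤ) (Nat.sub_le e 1)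
    rw [if_pos ⟨h1, pow_ne_zero _ hq'.ne_zero⟩, if_pos ⟨h2', pow_ne_zero _ hq'.ne_zero⟩]
    push_cast
    obtain ⟨m, hm⟩ : ∃ m, e = m + 1 := ⟨e - 1, by omega⟩
    rw [hm]
    simp only [Nat.add_sub_cancel, pow_succ]
    have hm0 : (0:ℤ) ≤ (q:ℤ) ^ m := by positivity
    rw [abs_of_nonneg (by nlinarith)]
    nlinarith
  · rw [if_neg (by tauto)]
    by_cases h2' : ((q ^ (e - 1) : ℕ) : ℤ) ∣ c
    · rw [if_pos ⟨h2', pow_ne_zero _ hq'.ne_zero⟩]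
      push_cast
      rw [zero_sub, abs_neg, abs_of_nonneg hple]
      nlinarith
    · rw [if_neg (by tauto)]
      simp only [sub_zero, abs_zero]
      exact mul_nonneg hple (by linarith)

lemma newman_exists_bad_prime {c : ℤ} {n : ℕ} (hn : n ≠ 0) (h : ¬ (n : ℤ) ∣ c) :
    ∃ q ∈ n.primeFactors, ¬ ((q ^ n.factorization q : ℕ) : ℤ) ∣ c := by
  by_contra hall
  push_neg at hall
  apply h
  have hn' : (n : ℤ) = ∏ q ∈ n.primeFactors, ((q : ℤ) ^ n.factorization q) := by
    conv_lhs => rw [← Nat.factorization_prod_pow_eq_self hn]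
    rw [Finsupp.prod, ← Nat.support_factorization]
    push_cast
    rfl
  rw [hn']
  refine Finset.prod_dvd_of_coprime ?_ ?_
  · intro q1 h1 q2 h2 hne
    have p1 := Nat.prime_of_mem_primeFactors h1
    have p2 := Nat.prime_of_mem_primeFactors h2
    have : Nat.Coprime (q1 ^ n.factorization q1) (q2 ^ n.factorization q2) :=
      Nat.Coprime.pow _ _ ((Nat.coprime_primes p1 p2).mpr hne)
    exact Nat.isCoprime_iff_coprime.mpr this
  · intro q hq
    have := hall q hq
    push_cast at this ⊢
    exact this

lemma newman_R_bound {c : ℤ} {n : ℕ} (hn : 2 ≤ n) (h : ¬ (n : ℤ) ∣ c) :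
    ((n.minFac : ℤ) - 1) * |(μ * NewmanFc c) n| ≤ (n.totient : ℤ) := by
  have hn0 : n ≠ 0 := by omega
  obtain ⟨q0, hq0, hbad⟩ := newman_exists_bad_prime hn0 h
  set v : ℕ → ℤ := fun q =>
    NewmanFc c (q ^ n.factorization q) - NewmanFc c (q ^ (n.factorization q - 1)) with hv
  set w : ℕ → ℤ := fun q => (q : ℤ) ^ (n.factorization q - 1) * ((q : ℤ) - 1) with hw
  have hwnn : ∀ q ∈ n.primeFactors, 0 ≤ w q := by
    intro q hq
    have hq' := Nat.prime_of_mem_primeFactors hq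
    have h2 : (2:ℤ) ≤ (q:ℤ) := by exact_mod_cast hq'.two_le
    exact mul_nonneg (by positivity) (by linarith)
  -- bound on the bad factor
  have hq0' : q0.Prime := Nat.prime_of_mem_primeFactors hq0
  have h2q0 : (2:ℤ) ≤ (q0:ℤ) := by exact_mod_cast hq0'.two_le
  have hp_le : (n.minFac : ℤ) ≤ (q0 : ℤ) := by
    exact_mod_cast Nat.minFac_le_of_dvd hq0'.two_le (Nat.dvd_of_mem_primeFactors hq0)
  have hvq0 : |v q0| ≤ (q0 : ℤ) ^ (n.factorization q0 - 1) := by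
    rw [hv]
    simp only
    rw [NewmanFc_apply, NewmanFc_apply, if_neg (by tauto)]
    by_cases h2' : ((q0 ^ (n.factorization q0 - 1) : ℕ) : ℤ) ∣ c
    · rw [if_pos ⟨h2', pow_ne_zero _ hq0'.ne_zero⟩, zero_sub, abs_neg,
        abs_of_nonneg (by positivity)]
      push_cast
      exact le_refl _
    · rw [if_neg (by tauto)]
      simp only [sub_zero, abs_zero]
      positivity
  have key0 : ((n.minFac : ℤ) - 1) * |v q0| ≤ w q0 := by
    have hpm : (0:ℤ) ≤ (n.minFac : ℤ) - 1 := by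
      have := n.minFac_pos
      have : (1:ℤ) ≤ (n.minFac : ℤ) := by exact_mod_cast this
      linarith
    calc ((n.minFac : ℤ) - 1) * |v q0| ≤ ((q0:ℤ) - 1) * ((q0 : ℤ) ^ (n.factorization q0 - 1)) := by
          apply mul_le_mul (by linarith) hvq0 (abs_nonneg _)
          linarith
      _ = w q0 := by rw [hw]; ring
  -- assemble
  rw [newman_R_eq_prod c hn0, newman_totient_cast hn0, Finset.abs_prod]
  rw [← Finset.mul_prod_erase _ _ hq0, ← Finset.mul_prod_erase _ w hq0, ← mul_assoc]
  refine mul_le_mul key0 ?_ ?_ (hwnn q0 hq0)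
  · refine Finset.prod_le_prod (fun q hq => abs_nonneg _) (fun q hq => ?_)
    exact newman_factor_abs_le hn0 (Finset.mem_of_mem_erase hq)
  · exact Finset.prod_nonneg fun q hq => abs_nonneg _

lemma newman_geom_fiber {n d : ℕ} (hn0 : n ≠ 0) (hd : d ∣ n) (hd0 : d ≠ 0)
    {z : ℂ} (hzprim : IsPrimitiveRoot z n) (c : ℤ) :
    ∑ t ∈ (Finset.range n).filter (fun t => d ∣ t), z ^ ((t : ℤ) * c)
      = if ((n / d : ℕ) : ℤ) ∣ c then ((n / d : ℕ) : ℂ) else 0 := by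
  have hdn : d * (n / d) = n := Nat.mul_div_cancel' hd
  have hM0 : n / d ≠ 0 := by
    intro h0; rw [h0, Nat.mul_zero] at hdn; exact hn0 hdn.symm
  -- reindex
  have hre : ∑ t ∈ (Finset.range n).filter (fun t => d ∣ t), z ^ ((t : ℤ) * c)
      = ∑ s ∈ Finset.range (n / d), (z ^ ((d : ℤ) * c)) ^ s := by
    rw [Finset.sum_bij' (fun t _ => t / d) (fun s _ => d * s)]
    · intro t ht
      simp only [Finset.mem_filter, Finset.mem_range] at ht
      simp only [Finset.mem_range]
      exact Nat.div_lt_div_of_lt_of_dvd hd ht.1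
    · intro s hs
      simp only [Finset.mem_range] at hs
      simp only [Finset.mem_filter, Finset.mem_range]
      constructor
      · calc d * s < d * (n / d) := by
              exact mul_lt_mul_of_pos_left hs (Nat.pos_of_ne_zero hd0)
        _ = n := hdn
      · exact Dvd.intro s rfl
    · intro t ht
      simp only [Finset.mem_filter] at ht
      exact Nat.mul_div_cancel' ht.2
    · intro s hs
      exact Nat.mul_div_cancel_left s (Nat.pos_of_ne_zero hd0)
    · intro t ht
      simp only [Finset.mem_filter] at ht
      obtain ⟨s, rfl⟩ := ht.2
      rw [Nat.mul_div_cancel_left s (Nat.pos_of_ne_zero hd0)]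
      rw [← zpow_natCast (z ^ ((d : ℤ) * c)) s, ← zpow_mul]
      congr 1
      push_cast
      ring
  rw [hre]
  have hcond : (z ^ ((d : ℤ) * c) = 1) ↔ (((n / d : ℕ) : ℤ) ∣ c) := by
    rw [hzprim.zpow_eq_one_iff_dvd]
    have hd0' : (d : ℤ) ≠ 0 := by exact_mod_cast hd0
    constructor
    · intro hdvd
      rw [← hdn] at hdvd
      push_cast at hdvd
      exact (mul_dvd_mul_iff_left hd0').mp hdvd
    · intro hdvd
      rw [← hdn]
      push_cast
      exact mul_dvd_mul_left _ hdvd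
  by_cases hz : z ^ ((d : ℤ) * c) = 1
  · rw [if_pos (hcond.mp hz), hz]
    simp
  · rw [if_neg (fun hc => hz (hcond.mpr hc))]
    rw [geom_sum_eq hz]
    have : (z ^ ((d : ℤ) * c)) ^ (n / d) = 1 := by
      rw [← zpow_natCast (z ^ ((d : ℤ) * c)) (n / d), ← zpow_mul]
      have hdn' : ((d:ℕ):ℤ) * ((n/d : ℕ):ℤ) = (n:ℤ) := by exact_mod_cast congrArg Nat.cast hdn
      have : (d : ℤ) * c * ((n / d : ℕ) : ℤ) = (n : ℤ) * c := by
        linear_combination c * hdn'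
      rw [this, zpow_mul, zpow_natCast, hzprim.pow_eq_one, one_zpow]
    rw [this, sub_self, zero_div]

lemma newman_ramanujan {n : ℕ} (hn : 2 ≤ n) {z : ℂ} (hzprim : IsPrimitiveRoot z n) (c : ℤ) :
    ∑ t ∈ (Finset.range n).filter n.Coprime, z ^ ((t : ℤ) * c)
      = (((μ * NewmanFc c) n : ℤ) : ℂ) := by
  have hn0 : n ≠ 0 := by omega
  -- indicator of coprimality via Möbius
  have ind : ∀ t : ℕ, (if n.Coprime t then (1 : ℂ) else 0)
      = ∑ d ∈ n.divisors, (if d ∣ t then ((μ d : ℤ) : ℂ) else 0) := by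
    intro t
    have h1 := congrArg (fun f : ArithmeticFunction ℤ => f (Nat.gcd n t)) moebius_mul_coe_zeta
    simp only [coe_mul_zeta_apply, one_apply] at h1
    have hsets : (Nat.gcd n t).divisors = n.divisors.filter (fun d => d ∣ t) := by
      ext d
      simp only [Nat.mem_divisors, Finset.mem_filter, Nat.dvd_gcd_iff]
      constructor
      · rintro ⟨⟨h1, h2⟩, -⟩
        exact ⟨⟨h1, hn0⟩, h2⟩
      · rintro ⟨⟨h1, -⟩, h2⟩
        refine ⟨⟨h1, h2⟩, ?_⟩
        intro hg
        exact hn0 (Nat.eq_zero_of_gcd_eq_zero_left hg)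
    rw [hsets] at h1
    rw [← Finset.sum_filter]
    have h2 : ∑ a ∈ Finset.filter (fun a => a ∣ t) n.divisors, ((μ a : ℤ) : ℂ)
        = ((if n.gcd t = 1 then (1:ℤ) else 0 : ℤ) : ℂ) := by
      rw [← h1]; push_cast; rfl
    rw [h2]
    by_cases hc : n.Coprime t
    · rw [if_pos hc, if_pos hc]; simp
    · rw [if_neg hc, if_neg hc]; simp
  calc ∑ t ∈ (Finset.range n).filter n.Coprime, z ^ ((t : ℤ) * c)
      = ∑ t ∈ Finset.range n, (if n.Coprime t then (1:ℂ) else 0) * z ^ ((t : ℤ) * c) := by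
        rw [Finset.sum_filter]
        refine Finset.sum_congr rfl fun t _ => ?_
        split_ifs <;> simp
    _ = ∑ t ∈ Finset.range n, ∑ d ∈ n.divisors,
          (if d ∣ t then ((μ d : ℤ) : ℂ) else 0) * z ^ ((t : ℤ) * c) := by
        refine Finset.sum_congr rfl fun t _ => ?_
        rw [ind t, Finset.sum_mul]
    _ = ∑ d ∈ n.divisors, ((μ d : ℤ) : ℂ) *
          ∑ t ∈ (Finset.range n).filter (fun t => d ∣ t), z ^ ((t : ℤ) * c) := by
        rw [Finset.sum_comm]
        refine Finset.sum_congr rfl fun d _ => ?_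
        rw [Finset.mul_sum, Finset.sum_filter]
        refine Finset.sum_congr rfl fun t _ => ?_
        split_ifs <;> simp
    _ = ∑ d ∈ n.divisors, ((μ d : ℤ) : ℂ) *
          (if ((n / d : ℕ) : ℤ) ∣ c then ((n / d : ℕ) : ℂ) else 0) := by
        refine Finset.sum_congr rfl fun d hd => ?_
        rw [newman_geom_fiber hn0 (Nat.dvd_of_mem_divisors hd)
          (Nat.pos_of_mem_divisors hd).ne' hzprim c]
    _ = (((μ * NewmanFc c) n : ℤ) : ℂ) := by
        rw [mul_apply, Nat.sum_divisorsAntidiagonal (f := fun x y => μ x * NewmanFc c y)]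
        push_cast
        refine Finset.sum_congr rfl fun d hd => ?_
        congr 1
        rw [NewmanFc_apply]
        have hnd0 : n / d ≠ 0 :=
          (Nat.div_pos (Nat.le_of_dvd (Nat.pos_of_ne_zero hn0) (Nat.dvd_of_mem_divisors hd))
            (Nat.pos_of_mem_divisors hd)).ne'
        split_ifs with h1 h2 h3
        · push_cast; rfl
        · exact absurd ⟨h1, hnd0⟩ h2
        · exact absurd h3.1 h1
        · simp

lemma newman_vanishing_card {n : ℕ} (hn : 2 ≤ n) {ι : Type*} [DecidableEq ι]
    (S : Finset ι) (b : ι → ℤ) (i₀ : ι) (hi₀ : i₀ ∈ S) (hb0 : b i₀ = 0)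
    (H : ∀ w : ℂ, IsPrimitiveRoot w n → ∑ i ∈ S, w ^ (b i) = 0) :
    n.minFac ≤ S.card := by
  have hn0 : n ≠ 0 := by omega
  obtain ⟨z, hz⟩ : ∃ z : ℂ, IsPrimitiveRoot z n := ⟨_, Complex.isPrimitiveRoot_exp n hn0⟩
  -- sum of Ramanujan sums vanishes
  have hsum : ∑ i ∈ S, (μ * NewmanFc (b i)) n = 0 := by
    have hC : ∑ i ∈ S, (((μ * NewmanFc (b i)) n : ℤ) : ℂ) = 0 := by
      have : ∑ i ∈ S, (((μ * NewmanFc (b i)) n : ℤ) : ℂ)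
          = ∑ i ∈ S, ∑ t ∈ (Finset.range n).filter n.Coprime, z ^ ((t : ℤ) * b i) := by
        exact Finset.sum_congr rfl fun i _ => (newman_ramanujan hn hz (b i)).symm
      rw [this, Finset.sum_comm]
      refine Finset.sum_eq_zero fun t ht => ?_
      have htcop : Nat.Coprime t n := ((Finset.mem_filter.mp ht).2).symm
      have hprim : IsPrimitiveRoot (z ^ t) n := hz.pow_of_coprime t htcop
      have := H (z ^ t) hprim
      rw [← this]
      refine Finset.sum_congr rfl fun i _ => ?_
      rw [← zpow_natCast z t, ← zpow_mul]
    exact_mod_cast hC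
  set p := n.minFac with hp
  have hφpos : 0 < (n.totient : ℤ) := by
    exact_mod_cast Nat.totient_pos.mpr (show 0 < n by omega)
  have hp1 : (1 : ℤ) ≤ (p : ℤ) - 1 := by
    have := Nat.minFac_prime (by omega : n ≠ 1)
    have : 2 ≤ p := this.two_le
    have : (2 : ℤ) ≤ (p : ℤ) := by exact_mod_cast this
    linarith
  -- each term bounded below
  have hlow : ∀ i ∈ S, -(n.totient : ℤ) ≤ ((p : ℤ) - 1) * (μ * NewmanFc (b i)) n := by
    intro i _
    by_cases hd : (n : ℤ) ∣ b i
    · rw [newman_R_of_dvd hn0 hd]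
      nlinarith
    · have := newman_R_bound hn hd
      have habs : -|(μ * NewmanFc (b i)) n| ≤ (μ * NewmanFc (b i)) n := neg_abs_le _
      nlinarith [abs_nonneg ((μ * NewmanFc (b i)) n)]
  -- split off i₀
  have hsplit : (μ * NewmanFc (b i₀)) n + ∑ i ∈ S.erase i₀, (μ * NewmanFc (b i)) n = 0 := by
    rw [Finset.add_sum_erase _ (fun i => (μ * NewmanFc (b i)) n) hi₀]; exact hsum
  have hi₀val : (μ * NewmanFc (b i₀)) n = (n.totient : ℤ) := by
    rw [hb0]; exact newman_R_of_dvd hn0 (dvd_zero _)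
  have hub : -(((S.card : ℤ) - 1) * (n.totient : ℤ)) ≤
      ((p : ℤ) - 1) * ∑ i ∈ S.erase i₀, (μ * NewmanFc (b i)) n := by
    rw [Finset.mul_sum]
    have h1 : ∑ i ∈ S.erase i₀, -(n.totient : ℤ) ≤
        ∑ i ∈ S.erase i₀, ((p : ℤ) - 1) * (μ * NewmanFc (b i)) n :=
      Finset.sum_le_sum fun i hi => hlow i (Finset.mem_of_mem_erase hi)
    have hcard : (S.erase i₀).card = S.card - 1 := Finset.card_erase_of_mem hi₀
    rw [Finset.sum_const, hcard, nsmul_eq_mul] at h1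
    have hc1 : 1 ≤ S.card := Finset.card_pos.mpr ⟨i₀, hi₀⟩
    have hcast : ((S.card - 1 : ℕ) : ℤ) = (S.card : ℤ) - 1 := by omega
    rw [hcast] at h1
    linarith
  -- conclude
  have hkey : ((p : ℤ) - 1) ≤ (S.card : ℤ) - 1 := by
    have h1 : ((p : ℤ) - 1) * (μ * NewmanFc (b i₀)) n
        = -(((p : ℤ) - 1) * ∑ i ∈ S.erase i₀, (μ * NewmanFc (b i)) n) := by
      rw [← mul_neg]; congr 1; linarith
    rw [hi₀val] at h1
    nlinarith
  have hfin : (p : ℤ) ≤ (S.card : ℤ) := by linarith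
  exact_mod_cast hfin

lemma newman_cover_fiber {m d N : ℕ} (hm : 2 ≤ m) (hd1 : 1 ≤ d) (hdm : d ≤ m)
    (hdN : d ∣ N) (hmN : m ∣ N) (hN0 : N ≠ 0)
    {z : ℂ} (hz : IsPrimitiveRoot z m) (α : ℤ) :
    ∑ x ∈ Finset.range N, (if (d : ℤ) ∣ (x : ℤ) - α then z ^ (x : ℕ) else 0)
      = if d = m then ((N / m : ℕ) : ℂ) * z ^ α else 0 := by
  have hd0 : (0:ℤ) < (d:ℤ) := by exact_mod_cast hd1
  set r : ℕ := (α % d).toNat with hr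
  have hr0 : (0:ℤ) ≤ α % d := Int.emod_nonneg α hd0.ne'
  have hrcast : ((r : ℕ) : ℤ) = α % d := Int.toNat_of_nonneg hr0
  have hrlt : r < d := by
    have := Int.emod_lt_of_pos α hd0
    omega
  have hda : (d : ℤ) ∣ α - r := by
    rw [hrcast]
    exact Int.dvd_self_sub_of_emod_eq rfl
  have hdN' : d * (N / d) = N := Nat.mul_div_cancel' hdN
  have hM0 : N / d ≠ 0 := by
    intro h0; rw [h0, Nat.mul_zero] at hdN'; exact hN0 hdN'.symm
  -- condition rewriting
  have hcondx : ∀ x : ℕ, ((d : ℤ) ∣ (x : ℤ) - α) ↔ (x % d = r) := by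
    intro x
    have h1 : ((d : ℤ) ∣ (x : ℤ) - α) ↔ ((d : ℤ) ∣ (x : ℤ) - r) := by
      constructor
      · intro h
        have h'' := dvd_add h hda
        simpa [sub_add_sub_cancel] using h''
      · intro h
        have h'' := dvd_sub h hda
        simpa [sub_sub_sub_cancel_right] using h''
    have h2 : ((d:ℤ) ∣ (x:ℤ) - r) ↔ ((x:ℤ) % d = (r:ℤ) % d) := by
      rw [Int.dvd_iff_emod_eq_zero]
      exact Int.emod_eq_emod_iff_emod_sub_eq_zero.symm
    rw [h1, h2]
    have h3 : ((r:ℤ)) % d = r := Int.emod_eq_of_lt (by positivity) (by exact_mod_cast hrlt)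
    have h4 : (x:ℤ) % d = ((x % d : ℕ) : ℤ) := by push_cast; ring
    rw [h3, h4]
    exact ⟨fun h => by exact_mod_cast h, fun h => by exact_mod_cast h⟩
  -- reindex the fiber
  have hre : ∑ x ∈ Finset.range N, (if (d : ℤ) ∣ (x : ℤ) - α then z ^ (x : ℕ) else 0)
      = ∑ s ∈ Finset.range (N / d), (z ^ d) ^ s * z ^ r := by
    rw [← Finset.sum_filter]
    have hsets : (Finset.range N).filter (fun x : ℕ => ((d : ℤ) ∣ (x : ℤ) - α))
        = (Finset.range N).filter (fun x : ℕ => x % d = r) := by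
      ext x
      simp only [Finset.mem_filter, Finset.mem_range, hcondx]
    rw [hsets]
    rw [Finset.sum_bij' (fun x _ => x / d) (fun s _ => d * s + r)]
    · intro x hx
      simp only [Finset.mem_filter, Finset.mem_range] at hx
      simp only [Finset.mem_range]
      exact Nat.div_lt_div_of_lt_of_dvd hdN hx.1
    · intro s hs
      simp only [Finset.mem_range] at hs
      simp only [Finset.mem_filter, Finset.mem_range]
      refine ⟨?_, ?_⟩
      · have h7 : d * (s + 1) ≤ d * (N / d) := Nat.mul_le_mul_left d (by omega)
        have h8 : d * (s + 1) = d * s + d := by ring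
        rw [h8, hdN'] at h7
        linarith [hrlt]
      · rw [Nat.mul_add_mod, Nat.mod_eq_of_lt hrlt]
    · intro x hx
      simp only [Finset.mem_filter, Finset.mem_range] at hx
      rw [← hx.2]
      exact Nat.div_add_mod x d
    · intro s hs
      rw [Nat.mul_add_div (by omega : 0 < d), Nat.div_eq_of_lt hrlt]
      omega
    · intro x hx
      simp only [Finset.mem_filter, Finset.mem_range] at hx
      have hxe : d * (x / d) + r = x := by
        rw [← hx.2]
        exact Nat.div_add_mod x d
      rw [← pow_mul, ← pow_add, hxe]
  rw [hre, ← Finset.sum_mul]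
  have hz0 : z ≠ 0 := hz.ne_zero (by omega)
  by_cases hdm' : d = m
  · subst hdm'
    rw [if_pos rfl, hz.pow_eq_one]
    simp only [one_pow, Finset.sum_const, Finset.card_range, nsmul_eq_mul, mul_one]
    congr 1
    -- z ^ r = z ^ α  (zpow on the right)
    obtain ⟨t, ht⟩ := hda
    have hα : α = (r : ℤ) + (d : ℤ) * t := by linarith
    rw [hα, zpow_add₀ hz0, zpow_mul, zpow_natCast, zpow_natCast, hz.pow_eq_one, one_zpow,
      mul_one]
  · rw [if_neg hdm']
    have hzd : z ^ d ≠ 1 := by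
      intro h1
      exact hdm' (le_antisymm hdm (Nat.le_of_dvd (by omega) ((hz.pow_eq_one_iff_dvd d).mp h1)))
    rw [geom_sum_eq hzd]
    have hone : (z ^ d) ^ (N / d) = 1 := by
      rw [← pow_mul, hdN']
      obtain ⟨c, hc⟩ := hmN
      rw [hc, pow_mul, hz.pow_eq_one, one_pow]
    rw [hone, sub_self, zero_div, zero_mul]

lemma newman_cover_vanishing {k : ℕ} (a : Fin k → ℤ) (n : Fin k → ℕ)
    (hn1 : ∀ i, 1 ≤ n i) {m : ℕ} (hm : 2 ≤ m) (hle : ∀ i, n i ≤ m)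
    (hcover : ∀ x : ℤ, ∃! i : Fin k, (n i : ℤ) ∣ x - a i)
    {z : ℂ} (hz : IsPrimitiveRoot z m) :
    ∑ i ∈ Finset.univ.filter (fun i => n i = m), z ^ (a i) = 0 := by
  classical
  set N := m * ∏ i, n i with hN
  have hP0 : ∏ i, n i ≠ 0 := by
    apply Finset.prod_ne_zero_iff.mpr
    intro i _
    have := hn1 i; omega
  have hN0 : N ≠ 0 := Nat.mul_ne_zero (by omega) hP0
  have hmN : m ∣ N := Dvd.intro _ rfl
  have hdN : ∀ i, n i ∣ N := fun i => Dvd.dvd.mul_left (Finset.dvd_prod_of_mem n (Finset.mem_univ i)) m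
  -- total sum is zero
  have hS : ∑ x ∈ Finset.range N, z ^ (x : ℕ) = 0 := by
    rw [geom_sum_eq (hz.ne_one (by omega))]
    have : z ^ N = 1 := by
      rw [hN, pow_mul, hz.pow_eq_one, one_pow]
    rw [this, sub_self, zero_div]
  -- fiberwise decomposition
  have hdec : ∑ x ∈ Finset.range N, z ^ (x : ℕ)
      = ∑ i : Fin k, ∑ x ∈ Finset.range N,
          (if (n i : ℤ) ∣ (x : ℤ) - a i then z ^ (x : ℕ) else 0) := by
    rw [Finset.sum_comm]
    refine Finset.sum_congr rfl fun x _ => ?_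
    obtain ⟨i0, hi0, huniq⟩ := hcover (x : ℤ)
    rw [Finset.sum_eq_single i0]
    · rw [if_pos hi0]
    · intro j _ hj
      rw [if_neg]
      intro hdvd
      exact hj (huniq j hdvd)
    · intro h
      exact absurd (Finset.mem_univ i0) h
  rw [hdec] at hS
  have hfib : ∀ i : Fin k, ∑ x ∈ Finset.range N,
      (if (n i : ℤ) ∣ (x : ℤ) - a i then z ^ (x : ℕ) else 0)
      = if n i = m then ((N / m : ℕ) : ℂ) * z ^ (a i) else 0 := fun i =>
    newman_cover_fiber hm (hn1 i) (hle i) (hdN i) hmN hN0 hz (a i)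
  rw [Finset.sum_congr rfl fun i _ => hfib i] at hS
  rw [← Finset.sum_filter] at hS
  rw [← Finset.mul_sum] at hS
  have hNm0 : ((N / m : ℕ) : ℂ) ≠ 0 := by
    have : N / m = ∏ i, n i := by
      rw [hN, Nat.mul_div_cancel_left _ (by omega : 0 < m)]
    rw [this]
    exact_mod_cast hP0
  exact (mul_eq_zero.mp hS).resolve_left hNm0

/-- Newman's theorem: in an exact covering system of `ℤ` with moduli sorted
increasingly, the largest modulus occurs at least `p(n_k)` times, where
`p(n_k)` is the least prime factor of the largest modulus. -/
theorem exact_cover_largest_modulus_repeated_minFac {k : ℕ} (hk : 2 ≤ k)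
    (a : Fin k → ℤ) (n : Fin k → ℕ) (hn : ∀ i, 2 ≤ n i)
    (hmono : Monotone n)
    (hcover : ∀ x : ℤ, ∃! i : Fin k, (n i : ℤ) ∣ x - a i) :
    ∀ i : Fin k, k - (n ⟨k - 1, by omega⟩).minFac ≤ (i : ℕ) →
      n i = n ⟨k - 1, by omega⟩ := by
  classical
  intro i hi
  set last : Fin k := ⟨k - 1, by omega⟩ with hlast
  set m := n last with hm
  have hm2 : 2 ≤ m := hn last
  set p := m.minFac with hp
  have hle : ∀ j, n j ≤ m := by
    intro j
    apply hmono
    have : j.1 ≤ k - 1 := by omega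
    exact this
  set T := Finset.univ.filter (fun j : Fin k => n j = m) with hT
  have hlastT : last ∈ T := by
    rw [hT, Finset.mem_filter]
    exact ⟨Finset.mem_univ _, rfl⟩
  -- vanishing sums at primitive m-th roots for the shifted exponents
  have H : ∀ w : ℂ, IsPrimitiveRoot w m → ∑ j ∈ T, w ^ (a j - a last) = 0 := by
    intro w hw
    have hw0 : w ≠ 0 := hw.ne_zero (by omega)
    have hv := newman_cover_vanishing a n (fun j => by have := hn j; omega) hm2 hle hcover hw
    calc ∑ j ∈ T, w ^ (a j - a last)
        = ∑ j ∈ T, w ^ (a j) * w ^ (-a last) := by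
          refine Finset.sum_congr rfl fun j _ => ?_
          rw [sub_eq_add_neg, zpow_add₀ hw0]
      _ = (∑ j ∈ T, w ^ (a j)) * w ^ (-a last) := by rw [Finset.sum_mul]
      _ = 0 := by rw [hT] at *; rw [hv, zero_mul]
  have hcard : p ≤ T.card :=
    newman_vanishing_card hm2 T (fun j => a j - a last) last hlastT (sub_self _) H
  -- a minimal-index element of T
  obtain ⟨j0, hj0T, hj0min⟩ := Finset.exists_min_image T (fun j => j.1) ⟨last, hlastT⟩
  have hTsub : ∀ j ∈ T, j.1 ∈ Finset.Ico j0.1 k := by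
    intro j hj
    rw [Finset.mem_Ico]
    exact ⟨hj0min j hj, j.2⟩
  have hcard2 : T.card ≤ k - j0.1 := by
    have := Finset.card_le_card_of_injOn (fun j : Fin k => j.1) hTsub
      (fun x _ y _ h => Fin.ext h)
    rwa [Nat.card_Ico] at this
  have hj0le : j0.1 ≤ (i : ℕ) := by omega
  have hj0m : n j0 = m := (Finset.mem_filter.mp hj0T).2
  refine le_antisymm (hle i) ?_
  rw [← hj0m]
  exact hmono hj0le
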